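/- Let $\{p_n\}$ be orthonormal polynomials with respect to a probability measure $\mu$ on a compact interval $[a,b]$, and suppose the Poisson kernel $P_r(x,y) = \sum_{n=0}^\infty p_n(x)p_n(y)r^n$ converges and is nonnegative for all $x,y$ in the support of $\mu$ and $0<r<1$. Then for every continuous function $f$ on $[a,b]$, $\int_a^b P_r(x,y) f(y)\,d\mu(y) \to f(x)$ uniformly on $[a,b]$ as $r \to 1^-$. -/

import Mathlib

noncomputable section

/-- The infinite $q$-shifted factorial $(a;q)_\infty = \prod_{k\ge 0}(1-aq^k)$. -/
def qp (q a : ℂ) : ℂ := ∏' k : ℕ, (1 - a * q ^ k)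

/-- The finite $q$-shifted factorial $(a;q)_n$. -/
def qpn (q a : ℂ) (n : ℕ) : ℂ := ∏ k ∈ Finset.range n, (1 - a * q ^ k)

/-- The generalized $q$-shifted factorial $(a;q)_\beta = (a;q)_\infty/(aq^\beta;q)_\infty$. -/
def qpr (q a β : ℂ) : ℂ := qp q a / qp q (a * q ^ β)

/-- $e^{i\theta}$. -/
def eθ (θ : ℝ) : ℂ := Complex.exp (θ * Complex.I)

/-- One factor of the function $h$: $(ae^{i\theta}, ae^{-i\theta};q)_\infty$. -/
def hf (q : ℂ) (θ : ℝ) (a : ℂ) : ℂ := qp q (a * eθ θ) * qp q (a * eθ (-θ))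

/-- The normalized weight of the continuous $q$-Hermite polynomials, as a function
of $\theta$ (so that $w_H(\cos\theta\mid q)$ is `wH q θ`). -/
def wH (q : ℂ) (θ : ℝ) : ℂ :=
  qp q q * qp q (eθ (2*θ)) * qp q (eθ (-(2*θ))) / (2 * Real.pi * Real.sin θ)

/-- The continuous $q$-Hermite polynomials: $H_0 = 1$, $H_1 = 2x$,
$2xH_n = H_{n+1} + (1-q^n)H_{n-1}$. -/
def cqH (q : ℝ) : ℕ → ℝ → ℝ
  | 0, _ => 1
  | 1, x => 2 * x
  | n+2, x => 2 * x * cqH q (n+1) x - (1 - q ^ (n+1)) * cqH q n x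

/-- Real power $q^t$, coerced into `ℂ`. -/
def qr (q t : ℝ) : ℂ := ((q ^ t : ℝ) : ℂ)

/-- The nonterminating $q$-monomial $\phi_\beta(\cos\theta; t)
  = (te^{i\theta}, te^{-i\theta}; q)_\beta$. -/
def phiB (q β t : ℂ) (θ : ℝ) : ℂ := qpr q (t * eθ θ) β * qpr q (t * eθ (-θ)) β

/-- The $q$-exponential function, defined through its continuous $q$-Hermite expansion
$(qt^2;q^2)_\infty \mathcal E_q(x;t) = \sum_n q^{n^2/4} t^n H_n(x|q)/(q;q)_n$. -/
def Eqf (q x : ℝ) (t : ℂ) : ℂ :=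
  (∑' n : ℕ, qr q ((n:ℝ)^2/4) * t ^ n / qpn q q n * (cqH q n x : ℂ)) /
    qp ((q:ℂ)^2) ((q:ℂ) * t^2)

/-- The two-parameter $q$-fractional integral operator $\mathcal K_{a,c}$, acting on
functions of $x = \cos\theta \in [-1,1]$. -/
def Kop (q a c : ℝ) (f : ℝ → ℂ) (x : ℝ) : ℂ :=
  qr q (a*(a-3)/4) * ((((1-q)/(2*c)) ^ a : ℝ) : ℂ) *
  hf q (Real.arccos x) (-(c:ℂ) * qr q (1 - a/2)) *
  hf q (Real.arccos x) (-(qr q (a/2)) / c) *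
  ∫ φ in (0:ℝ)..Real.pi,
    wH q φ * qp q (qr q a) * f (Real.cos φ) * Real.sin φ /
      (hf q φ (qr q (a/2) * eθ (Real.arccos x)) * hf q φ (qr q (a/2) * eθ (-(Real.arccos x))) *
        hf q φ (-1/(c:ℂ)) * hf q φ (-(c:ℂ) * q))

/-- The operator $\mathcal K_{a,c}$ written in the variable $z$ (with $x = (z+1/z)/2$),
so that it can be composed with the Askey--Wilson divided difference operator. -/
def Kz (q a c : ℝ) (f : ℝ → ℂ) (z : ℂ) : ℂ :=
  qr q (a*(a-3)/4) * ((((1-q)/(2*c)) ^ a : ℝ) : ℂ) *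
  (qp q (-(c:ℂ) * qr q (1 - a/2) * z) * qp q (-(c:ℂ) * qr q (1 - a/2) / z)) *
  (qp q (-(qr q (a/2)) / c * z) * qp q (-(qr q (a/2)) / (c * z))) *
  ∫ φ in (0:ℝ)..Real.pi,
    wH q φ * qp q (qr q a) * f (Real.cos φ) * Real.sin φ /
      (hf q φ (qr q (a/2) * z) * hf q φ (qr q (a/2) / z) *
        hf q φ (-1/(c:ℂ)) * hf q φ (-(c:ℂ) * q))

/-- The Askey--Wilson divided difference operator $\mathcal D_q$, acting on functions
written in the variable $z$ (with $x = (z + 1/z)/2$). -/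
def Dq (q : ℝ) (f : ℂ → ℂ) (z : ℂ) : ℂ :=
  (f (qr q (1/2) * z) - f (z / qr q (1/2))) /
    ((qr q (1/2) - qr q (-(1/2))) * (z - 1/z) / 2)

/-- The three-parameter family of operators $T(a,b,r)$, acting on functions of
$x = \cos\theta \in [-1,1]$. -/
def Tabr (q : ℝ) (a b : ℂ) (r : ℝ) (f : ℝ → ℂ) (x : ℝ) : ℂ :=
  hf q (Real.arccos x) a * hf q (Real.arccos x) b * qp q ((r:ℂ)^2) *
  ∫ φ in (0:ℝ)..Real.pi,
    wH q φ * f (Real.cos φ) * Real.sin φ /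
      (hf q φ ((r:ℂ) * eθ (Real.arccos x)) * hf q φ ((r:ℂ) * eθ (-(Real.arccos x))) *
        hf q φ a * hf q φ b)

/-- The Askey--Wilson polynomial $p_n(\cos\theta; a, b, c, d)$. -/
def awp (q : ℂ) (n : ℕ) (a b c d : ℂ) (θ : ℝ) : ℂ :=
  qpn q (a*b) n * qpn q (a*c) n * qpn q (a*d) n * a ^ (-(n:ℤ)) *
  ∑ k ∈ Finset.range (n+1),
    qpn q (q ^ (-(n:ℤ))) k * qpn q (q ^ ((n:ℤ)-1) * a * b * c * d) k *
      qpn q (a * eθ θ) k * qpn q (a * eθ (-θ)) k /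
      (qpn q q k * qpn q (a*b) k * qpn q (a*c) k * qpn q (a*d) k) * q ^ k

/-- The Askey--Wilson weight function $w(\cos\theta; t_1,t_2,t_3,t_4)$. -/
def aww (q t1 t2 t3 t4 : ℂ) (θ : ℝ) : ℂ :=
  qp q (eθ (2*θ)) * qp q (eθ (-(2*θ))) /
    (hf q θ t1 * hf q θ t2 * hf q θ t3 * hf q θ t4)

end

section PKaux
open MeasureTheory Filter
open scoped ENNReal NNReal


lemma pk_integrable_tsum {μ : Measure ℝ} {F : ℕ → ℝ → ℝ}
    (hF_int : ∀ i, Integrable (F i) μ)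
    (hF_sum : Summable fun i => ∫ y, ‖F i y‖ ∂μ) :
    Integrable (fun y => ∑' i, F i y) μ := by
  have hf'' : ∀ i, AEMeasurable (fun y => (‖F i y‖₊ : ℝ≥0∞)) μ := fun i => (hF_int i).1.enorm
  have hf' : ∑' i, ∫⁻ y, (‖F i y‖₊ : ℝ≥0∞) ∂μ ≠ ∞ := by
    have heq : ∀ i, ∫⁻ y, (‖F i y‖₊ : ℝ≥0∞) ∂μ = ENNReal.ofReal (∫ y, ‖F i y‖ ∂μ) :=
      fun i => (MeasureTheory.ofReal_integral_norm_eq_lintegral_enorm (hF_int i)).symm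
    rw [funext heq, ← ENNReal.ofReal_tsum_of_nonneg
      (fun i => integral_nonneg fun y => norm_nonneg _) hF_sum]
    exact ENNReal.ofReal_ne_top
  rw [← MeasureTheory.lintegral_tsum hf''] at hf'
  have hhh : ∀ᵐ y ∂μ, Summable fun n => ‖F n y‖ := by
    refine (MeasureTheory.ae_lt_top' (AEMeasurable.ennreal_tsum hf'') hf').mono fun y hy => ?_
    have := ENNReal.tsum_coe_ne_top_iff_summable_coe.mp hy.ne
    simpa [coe_nnnorm] using this
  constructor
  · rw [aestronglyMeasurable_iff_aemeasurable]
    refine aemeasurable_of_tendsto_metrizable_ae atTop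
      (fun N : ℕ => Finset.aemeasurable_fun_sum (Finset.range N) fun i _ => (hF_int i).aemeasurable) ?_
    filter_upwards [hhh] with y hy
    exact hy.of_norm.hasSum.tendsto_sum_nat
  · show (∫⁻ y, (‖∑' i, F i y‖₊ : ℝ≥0∞) ∂μ) < ⊤
    refine lt_of_le_of_lt (le_trans (lintegral_mono_ae ?_) le_rfl) hf'.lt_top
    filter_upwards [hhh] with y hy
    calc (‖∑' i, F i y‖₊ : ℝ≥0∞) = ENNReal.ofReal ‖∑' i, F i y‖ := (ofReal_norm _).symm
      _ ≤ ENNReal.ofReal (∑' i, ‖F i y‖) := ENNReal.ofReal_le_ofReal (norm_tsum_le_tsum_norm hy)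
      _ = ∑' i, ENNReal.ofReal ‖F i y‖ := ENNReal.ofReal_tsum_of_nonneg (fun i => norm_nonneg _) hy
      _ = ∑' i, (‖F i y‖₊ : ℝ≥0∞) := tsum_congr fun i => ofReal_norm _

lemma pk_ae {a b : ℝ} {μ : Measure ℝ} (hsupp : μ (Set.Icc a b)ᶜ = 0) :
    ∀ᵐ y ∂μ, y ∈ Set.Icc a b := by
  rw [MeasureTheory.ae_iff]; exact hsupp

lemma pk_int_bdd {a b : ℝ} {μ : Measure ℝ} [IsFiniteMeasure μ]
    (hsupp : μ (Set.Icc a b)ᶜ = 0) {g : ℝ → ℝ} {C : ℝ}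
    (hgm : AEStronglyMeasurable g μ) (hC : ∀ y ∈ Set.Icc a b, |g y| ≤ C) :
    Integrable g μ :=
  (integrable_const C).mono' hgm ((pk_ae hsupp).mono fun y hy => by
    simpa [Real.norm_eq_abs] using hC y hy)

lemma pk_int_cont {a b : ℝ} {μ : Measure ℝ} [IsFiniteMeasure μ]
    (hsupp : μ (Set.Icc a b)ᶜ = 0) {g : ℝ → ℝ} (hg : Continuous g) :
    Integrable g μ := by
  obtain ⟨C, hC⟩ := isCompact_Icc.exists_bound_of_continuousOn
    (hg.continuousOn (s := Set.Icc a b))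
  exact pk_int_bdd hsupp hg.aestronglyMeasurable fun y hy => by
    simpa [Real.norm_eq_abs] using hC y hy

lemma pk_summable1 {p : ℕ → Polynomial ℝ} {r x : ℝ} (hr : r ∈ Set.Ioo (0:ℝ) 1)
    (Sx : Summable fun n => (p n).eval x * (p n).eval x * r ^ n) :
    Summable fun n => |(p n).eval x| * r ^ n := by
  refine Summable.of_nonneg_of_le
    (fun n => mul_nonneg (abs_nonneg _) (pow_nonneg hr.1.le n)) (fun n => ?_)
    ((Sx.add (summable_geometric_of_lt_one hr.1.le hr.2)).div_const 2)
  have h1 : (0:ℝ) ≤ r ^ n := pow_nonneg hr.1.le n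
  nlinarith [mul_nonneg h1 (sq_nonneg (|(p n).eval x| - 1)), sq_abs ((p n).eval x)]

lemma pk_summable2 {p : ℕ → Polynomial ℝ} {r x y : ℝ} (hr : r ∈ Set.Ioo (0:ℝ) 1)
    (Sx : Summable fun n => (p n).eval x * (p n).eval x * r ^ n)
    (Sy : Summable fun n => (p n).eval y * (p n).eval y * r ^ n) :
    Summable fun n => |(p n).eval x| * |(p n).eval y| * r ^ n := by
  refine Summable.of_nonneg_of_le
    (fun n => mul_nonneg (mul_nonneg (abs_nonneg _) (abs_nonneg _)) (pow_nonneg hr.1.le n))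
    (fun n => ?_) ((Sx.add Sy).div_const 2)
  have h1 : (0:ℝ) ≤ r ^ n := pow_nonneg hr.1.le n
  nlinarith [mul_nonneg h1 (sq_nonneg (|(p n).eval x| - |(p n).eval y|)),
    sq_abs ((p n).eval x), sq_abs ((p n).eval y)]

lemma pk_key {a b : ℝ} (hab : a ≤ b) {μ : Measure ℝ} [IsProbabilityMeasure μ]
    (hsupp : μ (Set.Icc a b)ᶜ = 0) (p : ℕ → Polynomial ℝ)
    (horth : ∀ m n, ∫ y, (p m).eval y * (p n).eval y ∂μ = if m = n then 1 else 0)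
    {r x : ℝ} (hr : r ∈ Set.Ioo (0:ℝ) 1)
    (Sx : Summable fun n => (p n).eval x * (p n).eval x * r ^ n)
    {g : ℝ → ℝ} {C : ℝ} (hgm : AEStronglyMeasurable g μ)
    (hC : ∀ y ∈ Set.Icc a b, |g y| ≤ C) :
    Integrable (fun y => (∑' n, (p n).eval x * (p n).eval y * r ^ n) * g y) μ ∧
      ∫ y, (∑' n, (p n).eval x * (p n).eval y * r ^ n) * g y ∂μ
        = ∑' n, (p n).eval x * (∫ y, (p n).eval y * g y ∂μ) * r ^ n := by
  set F : ℕ → ℝ → ℝ := fun n y => (p n).eval x * (p n).eval y * r ^ n * g y with hF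
  have hC0 : 0 ≤ C := le_trans (abs_nonneg _) (hC a ⟨le_refl a, hab⟩)
  have hpm : ∀ n : ℕ, Continuous fun y => (p n).eval y := fun n => (p n).continuous
  have hFm : ∀ n, AEStronglyMeasurable (F n) μ := fun n =>
    (((hpm n).aestronglyMeasurable.const_mul _).mul_const _).mul hgm
  have hFint : ∀ n, Integrable (F n) μ := by
    intro n
    obtain ⟨B, hB⟩ := isCompact_Icc.exists_bound_of_continuousOn
      ((hpm n).continuousOn (s := Set.Icc a b))
    have hB0 : (0:ℝ) ≤ B := le_trans (norm_nonneg _) (hB a ⟨le_refl a, hab⟩)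
    refine pk_int_bdd hsupp (hFm n) (C := |(p n).eval x| * B * r ^ n * C) fun y hy => ?_
    have h1 : |(p n).eval y| ≤ B := by simpa [Real.norm_eq_abs] using hB y hy
    have h2 : |g y| ≤ C := hC y hy
    have h3 : (0:ℝ) < r ^ n := pow_pos hr.1 n
    calc |F n y| = |(p n).eval x| * |(p n).eval y| * r ^ n * |g y| := by
          rw [hF]; simp only []
          rw [abs_mul, abs_mul, abs_mul, abs_of_pos h3]
      _ ≤ |(p n).eval x| * B * r ^ n * C := by
          have h6 : |(p n).eval x| * |(p n).eval y| ≤ |(p n).eval x| * B :=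
            mul_le_mul_of_nonneg_left h1 (abs_nonneg _)
          have h7 : |(p n).eval x| * |(p n).eval y| * r ^ n ≤ |(p n).eval x| * B * r ^ n :=
            mul_le_mul_of_nonneg_right h6 h3.le
          exact mul_le_mul h7 h2 (abs_nonneg _)
            (mul_nonneg (mul_nonneg (abs_nonneg _) hB0) h3.le)
  have hx_r : Summable fun n => |(p n).eval x| * r ^ n * C :=
    (pk_summable1 hr Sx).mul_right C
  have hInorm : ∀ n, ∫ y, ‖F n y‖ ∂μ ≤ |(p n).eval x| * r ^ n * C := by
    intro n
    set D : ℝ := |(p n).eval x| * r ^ n * C with hD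
    have hD0 : 0 ≤ D :=
      mul_nonneg (mul_nonneg (abs_nonneg _) (pow_nonneg hr.1.le n)) hC0
    have hint2 : Integrable (fun y => D/2 + D/2 * ((p n).eval y * (p n).eval y)) μ :=
      (integrable_const _).add ((pk_int_cont hsupp ((hpm n).mul (hpm n))).const_mul _)
    have hle : ∀ᵐ y ∂μ, ‖F n y‖ ≤ D/2 + D/2 * ((p n).eval y * (p n).eval y) := by
      filter_upwards [pk_ae hsupp] with y hy
      have h2 : |g y| ≤ C := hC y hy
      have h3 : (0:ℝ) < r ^ n := pow_pos hr.1 n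
      have h4 : ‖F n y‖ = |(p n).eval x| * |(p n).eval y| * r ^ n * |g y| := by
        rw [hF]; simp only [Real.norm_eq_abs]
        rw [abs_mul, abs_mul, abs_mul, abs_of_pos h3]
      have amgm : |(p n).eval y| ≤ (1 + (p n).eval y * (p n).eval y)/2 := by
        nlinarith [sq_nonneg (|(p n).eval y| - 1), sq_abs ((p n).eval y)]
      have h5 : |(p n).eval y| * |g y| ≤ C * ((1 + (p n).eval y * (p n).eval y)/2) := by
        nlinarith [mul_le_mul_of_nonneg_left h2 (abs_nonneg ((p n).eval y)),
          mul_le_mul_of_nonneg_left amgm hC0]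
      rw [h4, hD]
      nlinarith [mul_le_mul_of_nonneg_left h5
        (mul_nonneg (abs_nonneg ((p n).eval x)) h3.le)]
    calc ∫ y, ‖F n y‖ ∂μ
        ≤ ∫ y, (D/2 + D/2 * ((p n).eval y * (p n).eval y)) ∂μ :=
          integral_mono_of_nonneg (Eventually.of_forall fun y => norm_nonneg _) hint2 hle
      _ = D/2 + D/2 * 1 := by
          rw [integral_add (integrable_const _)
            ((pk_int_cont hsupp ((hpm n).fun_mul (hpm n))).const_mul _),
            integral_const, integral_const_mul, horth n n, if_pos rfl]
          simp
      _ = D := by ring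
  have hFsum : Summable fun n => ∫ y, ‖F n y‖ ∂μ :=
    Summable.of_nonneg_of_le (fun n => integral_nonneg fun y => norm_nonneg _) hInorm hx_r
  have heq : (fun y => (∑' n, (p n).eval x * (p n).eval y * r ^ n) * g y)
      = fun y => ∑' n, F n y := by
    funext y; rw [hF]; exact tsum_mul_right.symm
  constructor
  · rw [heq]; exact pk_integrable_tsum hFint hFsum
  · rw [heq, ← MeasureTheory.integral_tsum_of_summable_integral_norm hFint hFsum]
    refine tsum_congr fun n => ?_
    have hFn : F n = fun y => ((p n).eval x * r ^ n) * ((p n).eval y * g y) := by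
      funext y; rw [hF]; ring
    rw [hFn, integral_const_mul]; ring

section
variable {a b : ℝ} {μ : Measure ℝ} [IsProbabilityMeasure μ]
  (hsupp : μ (Set.Icc a b)ᶜ = 0) (p : ℕ → Polynomial ℝ)
  (hdeg : ∀ n, (p n).natDegree = n)
  (horth : ∀ m n, ∫ y, (p m).eval y * (p n).eval y ∂μ = if m = n then 1 else 0)

set_option linter.unusedSectionVars false

include hsupp hdeg horth

lemma pk_p0 : ∃ c0 : ℝ, c0 ≠ 0 ∧ p 0 = Polynomial.C c0 ∧ c0 * c0 = 1 := by
  obtain ⟨c0, hc0⟩ := Polynomial.natDegree_eq_zero.mp (hdeg 0)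
  refine ⟨c0, ?_, hc0.symm, ?_⟩
  · intro h
    have h2 := horth 0 0
    rw [if_pos rfl, ← hc0] at h2
    simp [h] at h2
  · have h2 := horth 0 0
    rw [if_pos rfl, ← hc0] at h2
    simpa [Polynomial.eval_C] using h2

lemma pk_pne (m : ℕ) : (p (m+1)).coeff (m+1) ≠ 0 := by
  have h0 := hdeg (m+1)
  have h1 : p (m+1) ≠ 0 := fun h => by simp [h] at h0
  have h2 := Polynomial.leadingCoeff_ne_zero.mpr h1
  rwa [← Polynomial.coeff_natDegree, h0] at h2

lemma pk_orth_zero : ∀ m : ℕ, ∀ q : Polynomial ℝ, q.natDegree ≤ m → ∀ n, m < n →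
    ∫ y, (p n).eval y * q.eval y ∂μ = 0 := by
  intro m
  induction m with
  | zero =>
    intro q hq n hn
    obtain ⟨c, hc⟩ := Polynomial.natDegree_eq_zero.mp (Nat.le_zero.mp hq)
    obtain ⟨c0, hc00, hp0, -⟩ := pk_p0 hsupp p hdeg horth
    have : (fun y => (p n).eval y * q.eval y)
        = fun y => (c / c0) * ((p n).eval y * (p 0).eval y) := by
      funext y; rw [← hc, hp0]; simp only [Polynomial.eval_C]
      field_simp
    rw [this, integral_const_mul, horth n 0, if_neg (by omega)]
    ring
  | succ m ih =>
    intro q hq n hn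
    have hpne := pk_pne hsupp p hdeg horth m
    set c : ℝ := q.coeff (m+1) / (p (m+1)).coeff (m+1) with hc
    set q' : Polynomial ℝ := q - Polynomial.C c * p (m+1) with hq'
    have hq'deg : q'.natDegree ≤ m := by
      rw [Polynomial.natDegree_le_iff_coeff_eq_zero]
      intro N hN
      rw [hq', Polynomial.coeff_sub, Polynomial.coeff_C_mul]
      rcases Nat.lt_or_ge (m+1) N with h | h
      · have e1 : q.coeff N = 0 :=
          Polynomial.coeff_eq_zero_of_natDegree_lt (lt_of_le_of_lt hq h)
        have e2 : (p (m+1)).coeff N = 0 :=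
          Polynomial.coeff_eq_zero_of_natDegree_lt (by rw [hdeg]; exact h)
        rw [e1, e2]
        ring
      · have hN1 : N = m + 1 := le_antisymm h hN
        rw [hN1, hc]
        field_simp
        ring
    have hsplit : (fun y => (p n).eval y * q.eval y)
        = fun y => (p n).eval y * q'.eval y + c * ((p n).eval y * (p (m+1)).eval y) := by
      funext y
      rw [hq']
      simp only [Polynomial.eval_sub, Polynomial.eval_mul, Polynomial.eval_C]
      ring
    rw [hsplit, integral_add
      (pk_int_cont hsupp ((p n).continuous.fun_mul q'.continuous))
      ((pk_int_cont hsupp ((p n).continuous.fun_mul (p (m+1)).continuous)).const_mul c),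
      integral_const_mul, ih q' hq'deg n (by omega), horth n (m+1), if_neg (by omega)]
    ring

lemma pk_expand : ∀ m : ℕ, ∀ q : Polynomial ℝ, q.natDegree ≤ m → ∀ x : ℝ,
    q.eval x = ∑ n ∈ Finset.range (m+1),
      (∫ y, (p n).eval y * q.eval y ∂μ) * (p n).eval x := by
  intro m
  induction m with
  | zero =>
    intro q hq x
    obtain ⟨c, hc⟩ := Polynomial.natDegree_eq_zero.mp (Nat.le_zero.mp hq)
    obtain ⟨c0, hc00, hp0, hc01⟩ := pk_p0 hsupp p hdeg horth
    rw [Finset.sum_range_one, ← hc, hp0]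
    simp only [Polynomial.eval_C]
    rw [integral_const]
    simp only [probReal_univ, one_smul]
    linear_combination (-c) * hc01

  | succ m ih =>
    intro q hq x
    have hpne := pk_pne hsupp p hdeg horth m
    have key : ∀ (c : ℝ) (q'' : Polynomial ℝ), q''.natDegree ≤ m →
        q = q'' + Polynomial.C c * p (m+1) →
        Polynomial.eval x q = ∑ n ∈ Finset.range (m+1+1),
          (∫ y, (p n).eval y * q.eval y ∂μ) * (p n).eval x := by
      intro c q'' hdeg'' hdecomp
      have hcoef : ∀ k, (∫ y, (p k).eval y * q.eval y ∂μ)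
          = (∫ y, (p k).eval y * q''.eval y ∂μ) + c * (if k = m+1 then 1 else 0) := by
        intro k
        rw [← horth k (m+1), ← integral_const_mul,
          ← integral_add (pk_int_cont hsupp ((p k).continuous.fun_mul q''.continuous))
            ((pk_int_cont hsupp ((p k).continuous.fun_mul (p (m+1)).continuous)).const_mul c)]
        congr 1
        funext y
        rw [hdecomp]
        simp only [Polynomial.eval_add, Polynomial.eval_mul, Polynomial.eval_C]
        ring
      calc Polynomial.eval x q = Polynomial.eval x q'' + c * Polynomial.eval x (p (m+1)) := by
            rw [hdecomp]; simp [Polynomial.eval_add, Polynomial.eval_mul]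
        _ = (∑ n ∈ Finset.range (m+1),
              (∫ y, (p n).eval y * q''.eval y ∂μ) * (p n).eval x)
            + c * Polynomial.eval x (p (m+1)) := by rw [← ih q'' hdeg'' x]
        _ = ∑ n ∈ Finset.range (m+1+1),
              ((∫ y, (p n).eval y * q''.eval y ∂μ) * (p n).eval x
                + (if n = m+1 then c * (p (m+1)).eval x else 0)) := by
            rw [Finset.sum_add_distrib,
              Finset.sum_ite_eq' (Finset.range (m+1+1)) (m+1)
                (fun _ => c * (p (m+1)).eval x),
              if_pos (Finset.mem_range.mpr (by omega))]
            have h0 : ∑ n ∈ Finset.range (m+1+1),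
                (∫ y, (p n).eval y * q''.eval y ∂μ) * (p n).eval x
                = ∑ n ∈ Finset.range (m+1),
                  (∫ y, (p n).eval y * q''.eval y ∂μ) * (p n).eval x := by
              rw [Finset.sum_range_succ,
                pk_orth_zero hsupp p hdeg horth m q'' hdeg'' (m+1) (by omega), zero_mul,
                add_zero]
            rw [h0]
        _ = ∑ n ∈ Finset.range (m+1+1),
              (∫ y, (p n).eval y * q.eval y ∂μ) * (p n).eval x := by
            refine Finset.sum_congr rfl fun n hn => ?_
            rw [hcoef n]
            by_cases h : n = m+1
            · rw [if_pos h, if_pos h, h]; ring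
            · rw [if_neg h, if_neg h]; ring
    refine key (q.coeff (m+1) / (p (m+1)).coeff (m+1))
      (q - Polynomial.C (q.coeff (m+1) / (p (m+1)).coeff (m+1)) * p (m+1)) ?_ (by ring)
    rw [Polynomial.natDegree_le_iff_coeff_eq_zero]
    intro N hN
    rw [Polynomial.coeff_sub, Polynomial.coeff_C_mul]
    rcases Nat.lt_or_ge (m+1) N with h | h
    · have e1 : q.coeff N = 0 :=
        Polynomial.coeff_eq_zero_of_natDegree_lt (lt_of_le_of_lt hq h)
      have e2 : (p (m+1)).coeff N = 0 :=
        Polynomial.coeff_eq_zero_of_natDegree_lt (by rw [hdeg]; exact h)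
      rw [e1, e2]
      ring
    · have hN1 : N = m + 1 := le_antisymm h hN
      rw [hN1]
      field_simp
      ring

end

end PKaux

open MeasureTheory in
set_option maxHeartbeats 2000000 in
/-- Korovkin-type theorem: a nonnegative Poisson kernel of orthonormal polynomials
is an approximate identity as $r \to 1^-$, uniformly on $[a,b]$. -/
theorem poisson_kernel_approximate_identity (a b : ℝ) (hab : a < b)
    (μ : Measure ℝ) [IsProbabilityMeasure μ] (hsupp : μ (Set.Icc a b)ᶜ = 0)
    (p : ℕ → Polynomial ℝ) (hdeg : ∀ n, (p n).natDegree = n)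
    (horth : ∀ m n, ∫ y, (p m).eval y * (p n).eval y ∂μ = if m = n then 1 else 0)
    (hsum : ∀ r ∈ Set.Ioo (0:ℝ) 1, ∀ x ∈ Set.Icc a b, ∀ y ∈ Set.Icc a b,
      Summable (fun n => (p n).eval x * (p n).eval y * r ^ n))
    (hpos : ∀ r ∈ Set.Ioo (0:ℝ) 1, ∀ x ∈ Set.Icc a b, ∀ y ∈ Set.Icc a b,
      0 ≤ ∑' n, (p n).eval x * (p n).eval y * r ^ n)
    (f : ℝ → ℝ) (hcont : ContinuousOn f (Set.Icc a b)) :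
    TendstoUniformlyOn
      (fun r x => ∫ y, (∑' n, (p n).eval x * (p n).eval y * r ^ n) * f y ∂μ)
      f (nhdsWithin 1 (Set.Ioo 0 1)) (Set.Icc a b) := by
  classical
  have hab' : a ≤ b := hab.le
  have haI : a ∈ Set.Icc a b := ⟨le_refl a, hab'⟩
  -- measurability and bound for f
  have hfm : AEStronglyMeasurable f μ := by
    rw [aestronglyMeasurable_iff_aemeasurable]
    have h1 : AEMeasurable f (μ.restrict (Set.Icc a b)) := hcont.aemeasurable measurableSet_Icc
    rwa [Measure.restrict_eq_self_of_ae_mem (pk_ae hsupp)] at h1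
  obtain ⟨M, hMn⟩ := isCompact_Icc.exists_bound_of_continuousOn hcont
  have hM : ∀ y ∈ Set.Icc a b, |f y| ≤ M := fun y hy => by
    simpa [Real.norm_eq_abs] using hMn y hy
  have hM0 : 0 ≤ M := le_trans (abs_nonneg _) (hM a haI)
  -- uniform approximation on polynomials of degree ≤ 2
  have Tpoly : ∀ q : Polynomial ℝ, q.natDegree ≤ 2 → ∃ Cq : ℝ, 0 ≤ Cq ∧
      ∀ r ∈ Set.Ioo (0:ℝ) 1, ∀ x ∈ Set.Icc a b,
        |(∫ y, (∑' n, (p n).eval x * (p n).eval y * r ^ n) * q.eval y ∂μ) - q.eval x|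
          ≤ Cq * (1 - r^2) := by
    intro q hq
    obtain ⟨Cq', hCq'⟩ := isCompact_Icc.exists_bound_of_continuousOn
      (q.continuous.continuousOn (s := Set.Icc a b))
    obtain ⟨B0, hB0⟩ := isCompact_Icc.exists_bound_of_continuousOn
      ((p 0).continuous.continuousOn (s := Set.Icc a b))
    obtain ⟨B1, hB1⟩ := isCompact_Icc.exists_bound_of_continuousOn
      ((p 1).continuous.continuousOn (s := Set.Icc a b))
    obtain ⟨B2, hB2⟩ := isCompact_Icc.exists_bound_of_continuousOn
      ((p 2).continuous.continuousOn (s := Set.Icc a b))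
    set B : ℝ := max B0 (max B1 B2) with hBdef
    have hB : ∀ n ∈ Finset.range 3, ∀ z ∈ Set.Icc a b, |(p n).eval z| ≤ B := by
      intro n hn z hz
      have hn3 : n = 0 ∨ n = 1 ∨ n = 2 := by
        have := Finset.mem_range.mp hn; omega
      rcases hn3 with h | h | h <;> subst h
      · exact le_trans (by simpa [Real.norm_eq_abs] using hB0 z hz) (le_max_left _ _)
      · exact le_trans (by simpa [Real.norm_eq_abs] using hB1 z hz)
          (le_trans (le_max_left _ _) (le_max_right _ _))
      · exact le_trans (by simpa [Real.norm_eq_abs] using hB2 z hz)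
          (le_trans (le_max_right _ _) (le_max_right _ _))
    have hBnn : 0 ≤ B := le_trans (abs_nonneg _) (hB 0 (by simp) a haI)
    refine ⟨(∑ n ∈ Finset.range 3, |∫ y, (p n).eval y * q.eval y ∂μ|) * B, by positivity, ?_⟩
    intro r hr x hx
    have hkey := pk_key hab' hsupp p horth hr (hsum r hr x hx x hx)
      q.continuous.aestronglyMeasurable (C := Cq')
      (fun y hy => by simpa [Real.norm_eq_abs] using hCq' y hy)
    rw [hkey.2]
    have hzero : ∀ n ∉ Finset.range 3,
        (p n).eval x * (∫ y, (p n).eval y * q.eval y ∂μ) * r ^ n = 0 := by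
      intro n hn
      have hn3 : 2 < n := by
        simp only [Finset.mem_range, not_lt] at hn; omega
      rw [pk_orth_zero hsupp p hdeg horth 2 q hq n hn3]
      ring
    rw [tsum_eq_sum hzero]
    conv_lhs => rw [pk_expand hsupp p hdeg horth 2 q hq x]
    rw [← Finset.sum_sub_distrib]
    refine le_trans (Finset.abs_sum_le_sum_abs _ _) ?_
    rw [Finset.sum_mul, Finset.sum_mul]
    refine Finset.sum_le_sum fun n hn => ?_
    have hpn : |(p n).eval x| ≤ B := hB n hn x hx
    have hrn : r^2 ≤ r^n := by
      apply pow_le_pow_of_le_one hr.1.le hr.2.le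
      have := Finset.mem_range.mp hn; omega
    have hrn1 : r^n ≤ 1 := pow_le_one₀ hr.1.le hr.2.le
    have heq : (p n).eval x * (∫ y, (p n).eval y * q.eval y ∂μ) * r ^ n
        - (∫ y, (p n).eval y * q.eval y ∂μ) * (p n).eval x
        = -((∫ y, (p n).eval y * q.eval y ∂μ) * (p n).eval x * (1 - r^n)) := by ring
    rw [heq, abs_neg, abs_mul, abs_mul,
      abs_of_nonneg (by linarith : (0:ℝ) ≤ 1 - r^n)]
    have h1 : |∫ y, (p n).eval y * q.eval y ∂μ| * |(p n).eval x|
        ≤ |∫ y, (p n).eval y * q.eval y ∂μ| * B :=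
      mul_le_mul_of_nonneg_left hpn (abs_nonneg _)
    exact mul_le_mul h1 (by linarith) (by linarith)
      (mul_nonneg (abs_nonneg _) hBnn)
  obtain ⟨C0, hC0nn, hT0⟩ := Tpoly 1 (by simp)
  obtain ⟨C1, hC1nn, hT1⟩ := Tpoly Polynomial.X (by simp)
  obtain ⟨C2, hC2nn, hT2⟩ := Tpoly (Polynomial.X^2) (by simp)
  simp only [Polynomial.eval_one] at hT0
  simp only [Polynomial.eval_X] at hT1
  simp only [Polynomial.eval_pow, Polynomial.eval_X] at hT2
  set X₀ : ℝ := max |a| |b| with hXdef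
  have hxX : ∀ x ∈ Set.Icc a b, |x| ≤ X₀ := fun x hx => abs_le_max_abs_abs hx.1 hx.2
  have hX0 : 0 ≤ X₀ := le_trans (abs_nonneg a) (le_max_left _ _)
  rw [Metric.tendstoUniformlyOn_iff]
  intro ε hε
  have huc := isCompact_Icc.uniformContinuousOn_of_continuous hcont
  rw [Metric.uniformContinuousOn_iff] at huc
  obtain ⟨δ, hδ, hδ'⟩ := huc (ε/4) (by linarith)
  set c : ℝ := 2*M/δ^2 with hcdef
  have hc0 : 0 ≤ c := by positivity
  set Q : ℝ := (ε/4) * C0 + c * (C2 + 2*X₀*C1 + X₀^2*C0) + M*C0 + 1 with hQdef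
  have hQ0 : 0 < Q := by positivity
  have hev : ∀ᶠ r in nhdsWithin 1 (Set.Ioo (0:ℝ) 1), 1 - r^2 < (ε/2)/Q := by
    apply eventually_nhdsWithin_of_eventually_nhds
    have h1 : Filter.Tendsto (fun r : ℝ => 1 - r^2) (nhds 1) (nhds 0) := by
      have h2 : Filter.Tendsto (fun r : ℝ => 1 - r^2) (nhds 1) (nhds (1 - 1^2)) :=
        Filter.Tendsto.sub tendsto_const_nhds ((continuous_pow 2).tendsto 1)
      simpa using h2
    exact h1.eventually_lt_const (by positivity)
  filter_upwards [hev, self_mem_nhdsWithin] with r hrQ hr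
  intro x hx
  have hr2 : 0 ≤ 1 - r^2 := by nlinarith [hr.1.le, hr.2.le]
  have Sx := hsum r hr x hx x hx
  have hxb : |x| ≤ X₀ := hxX x hx
  have hfx : |f x| ≤ M := hM x hx
  -- integrability facts
  have iKf := (pk_key hab' hsupp p horth hr Sx hfm hM).1
  have iK1 : Integrable
      (fun y => (∑' n, (p n).eval x * (p n).eval y * r ^ n) * 1) μ :=
    (pk_key hab' hsupp p horth hr Sx (g := fun _ => (1:ℝ)) aestronglyMeasurable_const
      (C := 1) (fun y _ => by norm_num)).1
  have iKy : Integrable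
      (fun y => (∑' n, (p n).eval x * (p n).eval y * r ^ n) * y) μ :=
    (pk_key hab' hsupp p horth hr Sx (g := fun y => y)
      continuous_id.aestronglyMeasurable (C := X₀) (fun y hy => hxX y hy)).1
  have iKy2 : Integrable
      (fun y => (∑' n, (p n).eval x * (p n).eval y * r ^ n) * y^2) μ :=
    (pk_key hab' hsupp p horth hr Sx (g := fun y => y^2)
      (continuous_pow 2).aestronglyMeasurable
      (C := X₀^2) (fun y hy => by
      have := hxX y hy
      rw [abs_pow]
      exact pow_le_pow_left₀ (abs_nonneg _) this 2)).1

  have iKh : Integrable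
      (fun y => (∑' n, (p n).eval x * (p n).eval y * r ^ n) * (ε/4 + c*(y-x)^2)) μ :=
    (pk_key hab' hsupp p horth hr Sx (g := fun y => ε/4 + c*(y-x)^2)
      ((continuous_const.add
        (continuous_const.mul ((continuous_id.sub continuous_const).pow 2))).aestronglyMeasurable)
      (C := ε/4 + c*(2*X₀)^2) (fun y hy => by
      have h1 := abs_le.mp (hxX y hy)
      have h2 := abs_le.mp hxb
      have h3 : (y - x)^2 ≤ (2*X₀)^2 := by nlinarith
      have h4 : (0:ℝ) ≤ c*(y-x)^2 := by positivity
      rw [abs_of_nonneg (by linarith : (0:ℝ) ≤ ε/4 + c*(y-x)^2)]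
      have h5 : c*(y-x)^2 ≤ c*(2*X₀)^2 := mul_le_mul_of_nonneg_left h3 hc0
      linarith)).1
  set K : ℝ → ℝ := fun y => ∑' n, (p n).eval x * (p n).eval y * r ^ n with hKdef
  have hKpos : ∀ y ∈ Set.Icc a b, 0 ≤ K y := fun y hy => hpos r hr x hx y hy
  set T0 : ℝ := ∫ y, K y * 1 ∂μ with hT0def
  set T1 : ℝ := ∫ y, K y * y ∂μ with hT1def
  set T2 : ℝ := ∫ y, K y * y^2 ∂μ with hT2def
  have e0 : |T0 - 1| ≤ C0*(1-r^2) := hT0 r hr x hx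
  have e1 : |T1 - x| ≤ C1*(1-r^2) := hT1 r hr x hx
  have e2 : |T2 - x^2| ≤ C2*(1-r^2) := hT2 r hr x hx
  -- decomposition of the main integral
  have iA : Integrable (fun y => K y * (f y - f x)) μ := by
    have heqA : (fun y => K y * (f y - f x)) = fun y => K y * f y - f x * (K y * 1) := by
      funext y; ring
    rw [heqA]
    exact iKf.sub (iK1.const_mul (f x))
  have hA1 : (∫ y, K y * (f y - f x) ∂μ)
      = (∫ y, K y * f y ∂μ) - f x * T0 := by
    have heqA : (fun y => K y * (f y - f x)) = fun y => K y * f y - f x * (K y * 1) := by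
      funext y; ring
    rw [heqA, integral_sub iKf (iK1.const_mul (f x)), integral_const_mul, hT0def]
  -- pointwise Korovkin bound
  have hpt : ∀ y ∈ Set.Icc a b, |f y - f x| ≤ ε/4 + c*(y-x)^2 := by
    intro y hy
    rcases lt_or_ge (dist y x) δ with h | h
    · have h1 := hδ' y hy x hx h
      rw [Real.dist_eq] at h1
      have h2 : (0:ℝ) ≤ c * (y-x)^2 := by positivity
      linarith
    · have h1 : δ ≤ |y - x| := by rwa [Real.dist_eq] at h
      have h2 : δ^2 ≤ (y - x)^2 := by nlinarith [abs_nonneg (y - x), sq_abs (y - x)]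
      have h3 : |f y - f x| ≤ 2*M := by
        have hy1 := abs_le.mp (hM y hy)
        have hx1 := abs_le.mp hfx
        rw [abs_le]; constructor <;> linarith
      have hδ2 : (0:ℝ) < δ^2 := by positivity
      have h4 : 2*M ≤ c * (y-x)^2 := by
        rw [hcdef, div_mul_eq_mul_div, le_div_iff₀ hδ2]
        nlinarith
      linarith
  have hAbound : |∫ y, K y * (f y - f x) ∂μ|
      ≤ ∫ y, K y * (ε/4 + c*(y-x)^2) ∂μ := by
    rw [abs_le]
    constructor
    · rw [← integral_neg]
      refine integral_mono_ae iKh.neg iA ?_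
      filter_upwards [pk_ae hsupp] with y hy
      have h1 : |K y * (f y - f x)| ≤ K y * (ε/4 + c*(y-x)^2) := by
        rw [abs_mul, abs_of_nonneg (hKpos y hy)]
        exact mul_le_mul_of_nonneg_left (hpt y hy) (hKpos y hy)
      have h2 := neg_abs_le (K y * (f y - f x))
      linarith
    · refine integral_mono_ae iA iKh ?_
      filter_upwards [pk_ae hsupp] with y hy
      have h1 : |K y * (f y - f x)| ≤ K y * (ε/4 + c*(y-x)^2) := by
        rw [abs_mul, abs_of_nonneg (hKpos y hy)]
        exact mul_le_mul_of_nonneg_left (hpt y hy) (hKpos y hy)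
      linarith [le_abs_self (K y * (f y - f x))]
  have hKh : (∫ y, K y * (ε/4 + c*(y-x)^2) ∂μ)
      = (ε/4 + c*x^2) * T0 + (-(2*c*x)) * T1 + c * T2 := by
    have heqh : (fun y => K y * (ε/4 + c*(y-x)^2))
        = fun y => ((ε/4 + c*x^2) * (K y * 1) + (-(2*c*x)) * (K y * y))
          + c * (K y * y^2) := by
      funext y; ring
    have j1 : Integrable (fun y => (ε/4 + c*x^2) * (K y * 1)) μ := iK1.const_mul _
    have j2 : Integrable (fun y => (-(2*c*x)) * (K y * y)) μ := iKy.const_mul _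
    have j3 : Integrable (fun y => c * (K y * y^2)) μ := iKy2.const_mul _
    have j12 : Integrable (fun y => (ε/4 + c*x^2) * (K y * 1)
        + (-(2*c*x)) * (K y * y)) μ := j1.add j2
    rw [heqh, integral_add j12 j3, integral_add j1 j2,
      integral_const_mul, integral_const_mul, integral_const_mul]
  -- assemble bounds
  have hT0le : T0 ≤ 1 + C0*(1-r^2) := by
    have := le_abs_self (T0 - 1); linarith [abs_le.mp e0]
  have hb1 : |x*(T1 - x)| ≤ X₀*(C1*(1-r^2)) := by
    rw [abs_mul]; exact mul_le_mul hxb e1 (abs_nonneg _) hX0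
  have hb0 : |x^2*(T0 - 1)| ≤ X₀^2*(C0*(1-r^2)) := by
    rw [abs_mul]
    refine mul_le_mul ?_ e0 (abs_nonneg _) (by positivity)
    rw [abs_pow]
    exact pow_le_pow_left₀ (abs_nonneg _) hxb 2
  have hW : |(T2 - x^2) - 2*(x*(T1-x)) + x^2*(T0-1)|
      ≤ C2*(1-r^2) + 2*(X₀*(C1*(1-r^2))) + X₀^2*(C0*(1-r^2)) := by
    have u1 := abs_le.mp e2
    have u2 := abs_le.mp hb1
    have u3 := abs_le.mp hb0
    rw [abs_le]; constructor <;> linarith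
  have hKhbound : (∫ y, K y * (ε/4 + c*(y-x)^2) ∂μ)
      ≤ ε/4 + ((ε/4)*C0 + c*(C2 + 2*X₀*C1 + X₀^2*C0)) * (1-r^2) := by
    rw [hKh]
    have hWexp : (ε/4 + c*x^2) * T0 + (-(2*c*x)) * T1 + c * T2
        = (ε/4)*T0 + c*((T2 - x^2) - 2*(x*(T1-x)) + x^2*(T0-1)) := by ring
    rw [hWexp]
    have s1 : (ε/4)*T0 ≤ (ε/4)*(1 + C0*(1-r^2)) :=
      mul_le_mul_of_nonneg_left hT0le (by positivity)
    have s2 : c*((T2 - x^2) - 2*(x*(T1-x)) + x^2*(T0-1))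
        ≤ c*(C2*(1-r^2) + 2*(X₀*(C1*(1-r^2))) + X₀^2*(C0*(1-r^2))) :=
      mul_le_mul_of_nonneg_left (le_trans (le_abs_self _) hW) hc0
    nlinarith [s1, s2]
  -- final estimate
  have hmain : |f x - ∫ y, K y * f y ∂μ|
      ≤ ε/4 + Q * (1-r^2) := by
    have hsplit : f x - (∫ y, K y * f y ∂μ)
        = -(∫ y, K y * (f y - f x) ∂μ) + f x * (1 - T0) := by
      rw [hA1]; ring
    rw [hsplit]
    have t1 : |(-(∫ y, K y * (f y - f x) ∂μ)) + f x * (1 - T0)|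
        ≤ |∫ y, K y * (f y - f x) ∂μ| + |f x| * |T0 - 1| := by
      refine le_trans (abs_add_le _ _) ?_
      rw [abs_neg, abs_mul, abs_sub_comm (1:ℝ) T0]
    have t2 : |f x| * |T0 - 1| ≤ M * (C0*(1-r^2)) :=
      mul_le_mul hfx e0 (abs_nonneg _) hM0
    have t3 := le_trans hAbound hKhbound
    have t4 : ((ε/4)*C0 + c*(C2 + 2*X₀*C1 + X₀^2*C0)) * (1-r^2) + M * (C0*(1-r^2))
        ≤ Q * (1-r^2) := by
      rw [hQdef]
      nlinarith [hr2]
    linarith [abs_le.mp hAbound]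
  have hQr : Q * (1-r^2) < ε/2 := by
    have h1 : Q * (1-r^2) < Q * ((ε/2)/Q) := mul_lt_mul_of_pos_left hrQ hQ0
    rwa [mul_div_cancel₀ _ (ne_of_gt hQ0)] at h1
  rw [Real.dist_eq]
  calc |f x - ∫ y, (∑' n, (p n).eval x * (p n).eval y * r ^ n) * f y ∂μ|
      = |f x - ∫ y, K y * f y ∂μ| := rfl
    _ ≤ ε/4 + Q * (1-r^2) := hmain
    _ < ε/4 + ε/2 := by linarith
    _ < ε := by linarith
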